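/- Let Ψ = (Ψ₀,Ψ₁,Ψ₂,Ψ₃): ℂ∖{0} → ℂ⁴∖{0} be holomorphic and projectively S¹-equivariant, in the sense that for every α ∈ ℝ and z ≠ 0 the vectors Ψ(e^{iα}z) and (Ψ₀(z), e^{iα}Ψ₁(z), e^{2iα}Ψ₂(z), e^{3iα}Ψ₃(z)) are ℂ-linearly dependent, and assume the induced projective map is nonconstant (i.e. there are z, z' with Ψ(z) and Ψ(z') not ℂ-linearly dependent). Then there exists μ = (μ₀,μ₁,μ₂,μ₃) ∈ ℂ⁴ with at least two nonzero entries such that for every z ≠ 0 the vectors Ψ(z) and (μ₀, μ₁ z, μ₂ z², μ₃ z³) are ℂ-linearly dependent. -/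

import Mathlib

noncomputable section

/-- The S¹-action of weights (0,1,2,3) on ℂ⁴. -/
def twist4 (α : ℝ) (v : Fin 4 → ℂ) : Fin 4 → ℂ :=
  ![v 0, Complex.exp (Complex.I * (α : ℂ)) * v 1,
    Complex.exp (2 * Complex.I * (α : ℂ)) * v 2,
    Complex.exp (3 * Complex.I * (α : ℂ)) * v 3]

/-- The curve z ↦ (μ₀, μ₁ z, μ₂ z², μ₃ z³). -/
def curve4 (μ : Fin 4 → ℂ) (z : ℂ) : Fin 4 → ℂ :=
  ![μ 0, μ 1 * z, μ 2 * z ^ 2, μ 3 * z ^ 3]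

lemma twist4_apply (α : ℝ) (v : Fin 4 → ℂ) (i : Fin 4) :
    twist4 α v i = Complex.exp (((i : ℕ) : ℂ) * (Complex.I * (α : ℂ))) * v i := by
  fin_cases i <;> simp [twist4] <;> ring_nf <;> tauto

lemma curve4_apply (μ : Fin 4 → ℂ) (z : ℂ) (i : Fin 4) :
    curve4 μ z i = μ i * z ^ (i : ℕ) := by
  fin_cases i <;> simp [curve4]

lemma exp_inv_ne_one (n : ℕ) : Complex.exp (Complex.I * (((n:ℝ) + 1)⁻¹ : ℝ)) ≠ 1 := by
  intro h
  rw [Complex.exp_eq_one_iff] at h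
  obtain ⟨m, hm⟩ := h
  have hm' : ((((n:ℝ) + 1)⁻¹ : ℝ) : ℂ) = (((m : ℝ) * (2 * Real.pi) : ℝ) : ℂ) := by
    apply mul_left_cancel₀ Complex.I_ne_zero
    rw [hm]; push_cast; ring
  have him : ((n:ℝ) + 1)⁻¹ = (m : ℝ) * (2 * Real.pi) := by exact_mod_cast hm'
  have hpos : (0:ℝ) < ((n:ℝ) + 1)⁻¹ := by positivity
  have hle : ((n:ℝ) + 1)⁻¹ ≤ 1 := by
    rw [inv_le_one_iff₀]; right; linarith [Nat.cast_nonneg (α := ℝ) n]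
  have hpi := Real.pi_gt_three
  rcases le_or_gt (m:ℝ) 0 with hm0 | hm0
  · nlinarith
  · have : (1:ℝ) ≤ m := by exact_mod_cast hm0
    nlinarith

lemma circle_seq : Filter.Tendsto (fun n : ℕ => Complex.exp (Complex.I * (((n:ℝ) + 1)⁻¹ : ℝ)))
    Filter.atTop (nhdsWithin (1 : ℂ) {(1:ℂ)}ᶜ) := by
  rw [tendsto_nhdsWithin_iff]
  constructor
  · have h0 : Filter.Tendsto (fun n : ℕ => (((n:ℝ) + 1)⁻¹ : ℝ)) Filter.atTop (nhds 0) :=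
      tendsto_one_div_add_atTop_nhds_zero_nat.congr (by intro n; rw [one_div])
    have h1 : Filter.Tendsto (fun n : ℕ => Complex.I * ((((n:ℝ) + 1)⁻¹ : ℝ) : ℂ))
        Filter.atTop (nhds 0) := by
      have := (Complex.continuous_ofReal.tendsto 0).comp h0
      simpa using this.const_mul Complex.I
    simpa [Function.comp_def] using (Complex.continuous_exp.tendsto 0).comp h1
  · exact Filter.Eventually.of_forall fun n => exp_inv_ne_one n

/-- Every nonconstant holomorphic projectively S¹-equivariant map
Ψ : ℂ ∖ {0} → ℂ⁴ ∖ {0} is projectively equal to z ↦ (μ₀, μ₁z, μ₂z², μ₃z³) for some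
μ ∈ ℂ⁴ with at least two nonzero entries. -/
theorem statement6 (Ψ : ℂ → (Fin 4 → ℂ))
    (hnz : ∀ z : ℂ, z ≠ 0 → Ψ z ≠ 0)
    (hhol : DifferentiableOn ℂ Ψ {z : ℂ | z ≠ 0})
    (hequiv : ∀ (α : ℝ), ∀ z : ℂ, z ≠ 0 →
      ∃ c : ℂ, c ≠ 0 ∧ Ψ (Complex.exp (Complex.I * (α : ℂ)) * z) = c • twist4 α (Ψ z))
    (hnonconst : ∃ z z' : ℂ, z ≠ 0 ∧ z' ≠ 0 ∧ ∀ c : ℂ, Ψ z' ≠ c • Ψ z) :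
    ∃ μ : Fin 4 → ℂ, (∃ i j : Fin 4, i ≠ j ∧ μ i ≠ 0 ∧ μ j ≠ 0) ∧
      ∀ z : ℂ, z ≠ 0 → ∃ c : ℂ, c ≠ 0 ∧ Ψ z = c • curve4 μ z := by
  set S : Set ℂ := {z : ℂ | z ≠ 0} with hS
  have hSopen : IsOpen S := isOpen_compl_singleton
  have hScon : IsPreconnected S := by
    have : IsConnected ({(0:ℂ)}ᶜ : Set ℂ) :=
      isConnected_compl_singleton_of_one_lt_rank (by rw [Complex.rank_real_complex]; norm_num) 0
    exact this.isPreconnected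
  have h1S : (1 : ℂ) ∈ S := one_ne_zero
  -- pick k with Ψ 1 k ≠ 0
  obtain ⟨k, hk⟩ : ∃ k : Fin 4, Ψ 1 k ≠ 0 := by
    by_contra h
    push_neg at h
    exact hnz 1 one_ne_zero (funext h)
  -- the key identity
  have main : ∀ j : Fin 4, ∀ z ∈ S,
      Ψ z j * z ^ (k : ℕ) * Ψ 1 k = Ψ z k * z ^ (j : ℕ) * Ψ 1 j := by
    intro j
    set G : ℂ → ℂ := fun z => Ψ z j * z ^ (k : ℕ) * Ψ 1 k - Ψ z k * z ^ (j : ℕ) * Ψ 1 j with hG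
    have hcomp : ∀ i : Fin 4, DifferentiableOn ℂ (fun z => Ψ z i) S := fun i =>
      fun z hz => ((ContinuousLinearMap.proj i :
        (Fin 4 → ℂ) →L[ℂ] ℂ).differentiableAt).comp_differentiableWithinAt z (hhol z hz)
    have hGdiff : DifferentiableOn ℂ G S := by
      apply DifferentiableOn.sub
      · exact (((hcomp j).mul ((differentiable_pow _).differentiableOn)).mul
          (differentiableOn_const _))
      · exact (((hcomp k).mul ((differentiable_pow _).differentiableOn)).mul
          (differentiableOn_const _))
    have hGan : AnalyticOnNhd ℂ G S := hGdiff.analyticOnNhd hSopen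
    -- G vanishes on the unit circle
    have hcirc : ∀ α : ℝ, G (Complex.exp (Complex.I * (α : ℂ))) = 0 := by
      intro α
      obtain ⟨c, hc0, hc⟩ := hequiv α 1 one_ne_zero
      have hval : ∀ i : Fin 4, Ψ (Complex.exp (Complex.I * (α : ℂ))) i
          = c * (Complex.exp (((i : ℕ) : ℂ) * (Complex.I * (α : ℂ))) * Ψ 1 i) := by
        intro i
        have := congrFun hc i
        rw [mul_one] at this
        rw [this, Pi.smul_apply, smul_eq_mul, twist4_apply]
      have hpow : ∀ m : ℕ, (Complex.exp (Complex.I * (α : ℂ))) ^ m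
          = Complex.exp ((m : ℂ) * (Complex.I * (α : ℂ))) := by
        intro m; rw [Complex.exp_nat_mul]
      simp only [hG, hval, hpow]
      ring
    have hfreq : ∃ᶠ z in nhdsWithin (1 : ℂ) {(1:ℂ)}ᶜ, G z = 0 :=
      circle_seq.frequently (Filter.Frequently.of_forall fun n => hcirc _)
    have hzero : Set.EqOn G 0 S :=
      hGan.eqOn_zero_of_preconnected_of_frequently_eq_zero hScon h1S hfreq
    intro z hz
    have := hzero hz
    simpa [hG, sub_eq_zero] using this
  -- Ψ · k never vanishes
  have hknz : ∀ z : ℂ, z ≠ 0 → Ψ z k ≠ 0 := by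
    intro z hz h0
    apply hnz z hz
    funext j
    have hm := main j z hz
    rw [h0] at hm
    simp only [zero_mul, Pi.zero_apply] at hm ⊢
    have hzk : z ^ (k : ℕ) ≠ 0 := pow_ne_zero _ hz
    exact (mul_eq_zero.mp ((mul_eq_zero.mp hm).resolve_right hk)).resolve_right hzk
  refine ⟨Ψ 1, ?_, ?_⟩
  · -- at least two nonzero entries
    by_contra h
    push_neg at h
    have hone : ∀ j : Fin 4, j ≠ k → Ψ 1 j = 0 := by
      intro j hj
      by_contra hj0
      exact hk (h j k hj hj0)
    obtain ⟨z, z', hz, hz', hne⟩ := hnonconst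
    refine hne (Ψ z' k / Ψ z k) ?_
    funext j
    rw [Pi.smul_apply, smul_eq_mul]
    by_cases hjk : j = k
    · subst hjk
      rw [div_mul_cancel₀ _ (hknz z hz)]
    · have hj0 := hone j hjk
      have h1 := main j z hz
      have h2 := main j z' hz'
      rw [hj0, mul_zero] at h1 h2
      have hzk : z ^ (k : ℕ) ≠ 0 := pow_ne_zero _ hz
      have hzk' : z' ^ (k : ℕ) ≠ 0 := pow_ne_zero _ hz'
      have e1 : Ψ z j = 0 := by
        have := (mul_eq_zero.mp h1).resolve_right hk
        exact (mul_eq_zero.mp this).resolve_right hzk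
      have e2 : Ψ z' j = 0 := by
        have := (mul_eq_zero.mp h2).resolve_right hk
        exact (mul_eq_zero.mp this).resolve_right hzk'
      rw [e1, e2, mul_zero]
  · intro z hz
    refine ⟨Ψ z k / (z ^ (k : ℕ) * Ψ 1 k), ?_, ?_⟩
    · exact div_ne_zero (hknz z hz) (mul_ne_zero (pow_ne_zero _ hz) hk)
    · funext j
      rw [Pi.smul_apply, smul_eq_mul, curve4_apply]
      have hm := main j z hz
      have hzk : z ^ (k : ℕ) ≠ 0 := pow_ne_zero _ hz
      rw [div_mul_eq_mul_div, eq_div_iff (mul_ne_zero hzk hk)]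
      linear_combination hm
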